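/- Let m_1, m_2, m_3 > 0, let cos σ_12, cos σ_23, cos σ_31 ∈ ℝ, let u_12, u_23, u_31 > 0, and let J be the 3×3 symmetric matrix with diagonal (m_2+m_3, m_3+m_1, m_1+m_2) and off-diagonal entries −√(m_i m_j) cos σ_ij. Set M = m_1 + m_2 + m_3. Then the following are equivalent: (a) there exist c_1, c_2, c_3 > 0 and ω ∈ ℝ such that, with w = (√m_1 c_1, √m_2 c_2, √m_3 c_3)ᵀ, one has J w = (M − Σ_k m_k c_k²) w and u_12/(c_1 c_2) = u_23/(c_2 c_3) = u_31/(c_3 c_1) = ω²/(Σ_k m_k c_k²); (b) the vector Ψ_L = (√m_1/u_23, √m_2/u_31, √m_3/u_12)ᵀ is an eigenvector of J with eigenvalue λ < M. (Here c_k plays the role of cos θ_k, so this is the necessary and sufficient condition for a shape σ_ij with potential-derivative values u_ij to form a Lagrangian relative equilibrium.) -/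

import Mathlib

open Real Matrix

/-- Necessary and sufficient condition for a shape to form a Lagrangian
relative equilibrium: the configuration data `(c_k, ω)` exists if and only if
`Ψ_L = (√m_1/u_23, √m_2/u_31, √m_3/u_12)ᵀ` is an eigenvector of `J` with
eigenvalue `λ < M`. -/
theorem shape_condition_for_LRE
    (m : Fin 3 → ℝ) (hm : ∀ k, 0 < m k)
    (c12 c23 c31 : ℝ) (u12 u23 u31 : ℝ)
    (hu12 : 0 < u12) (hu23 : 0 < u23) (hu31 : 0 < u31)
    (J : Matrix (Fin 3) (Fin 3) ℝ)
    (hJ : J = !![m 1 + m 2, -Real.sqrt (m 0 * m 1) * c12, -Real.sqrt (m 0 * m 2) * c31;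
                 -Real.sqrt (m 1 * m 0) * c12, m 2 + m 0, -Real.sqrt (m 1 * m 2) * c23;
                 -Real.sqrt (m 2 * m 0) * c31, -Real.sqrt (m 2 * m 1) * c23, m 0 + m 1])
    (M : ℝ) (hM : M = m 0 + m 1 + m 2) :
    (∃ c1 c2 c3 ω : ℝ, 0 < c1 ∧ 0 < c2 ∧ 0 < c3 ∧
      J.mulVec ![Real.sqrt (m 0) * c1, Real.sqrt (m 1) * c2, Real.sqrt (m 2) * c3]
        = (M - (m 0 * c1 ^ 2 + m 1 * c2 ^ 2 + m 2 * c3 ^ 2)) •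
          ![Real.sqrt (m 0) * c1, Real.sqrt (m 1) * c2, Real.sqrt (m 2) * c3] ∧
      u12 / (c1 * c2) = u23 / (c2 * c3) ∧
      u23 / (c2 * c3) = u31 / (c3 * c1) ∧
      u31 / (c3 * c1) = ω ^ 2 / (m 0 * c1 ^ 2 + m 1 * c2 ^ 2 + m 2 * c3 ^ 2))
    ↔
    (∃ lam : ℝ, lam < M ∧
      J.mulVec ![Real.sqrt (m 0) / u23, Real.sqrt (m 1) / u31, Real.sqrt (m 2) / u12]
        = lam • ![Real.sqrt (m 0) / u23, Real.sqrt (m 1) / u31, Real.sqrt (m 2) / u12]) := by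

  have hm0 := hm 0; have hm1 := hm 1; have hm2 := hm 2
  constructor
  · rintro ⟨c1, c2, c3, ω, hc1, hc2, hc3, heig, h1, h2, h3⟩
    set S := m 0 * c1 ^ 2 + m 1 * c2 ^ 2 + m 2 * c3 ^ 2 with hSdef
    have hS : 0 < S := by positivity
    set κ := u31 / (c3 * c1) with hκdef
    have hκ : 0 < κ := by positivity
    have hu31' : u31 = κ * (c3 * c1) := by
      rw [hκdef, div_mul_cancel₀ _ (by positivity : c3 * c1 ≠ 0)]
    have hu23' : u23 = κ * (c2 * c3) := by
      rw [← h2, div_mul_cancel₀ _ (by positivity : c2 * c3 ≠ 0)]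
    have hu12' : u12 = κ * (c1 * c2) := by
      rw [← (h1.trans h2), div_mul_cancel₀ _ (by positivity : c1 * c2 ≠ 0)]
    set t := (κ * (c1 * c2 * c3))⁻¹ with htdef
    have hvec : ![Real.sqrt (m 0) / u23, Real.sqrt (m 1) / u31, Real.sqrt (m 2) / u12]
        = t • ![Real.sqrt (m 0) * c1, Real.sqrt (m 1) * c2, Real.sqrt (m 2) * c3] := by
      funext i
      fin_cases i <;>
        simp only [Pi.smul_apply, Matrix.cons_val_zero, Matrix.cons_val_one,
          Matrix.head_cons, Matrix.cons_val_two, Matrix.tail_cons, smul_eq_mul, Fin.reduceFinMk,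
          htdef, hu23', hu31', hu12'] <;>
        field_simp <;> ring
    refine ⟨M - S, by linarith, ?_⟩
    rw [hvec, Matrix.mulVec_smul, heig, smul_comm]
  · rintro ⟨lam, hlam, heig⟩
    set S := M - lam with hSdef
    have hS : 0 < S := by simp [hSdef]; linarith
    set Q := m 0 / u23 ^ 2 + m 1 / u31 ^ 2 + m 2 / u12 ^ 2 with hQdef
    have hQ : 0 < Q := by positivity
    set s := Real.sqrt (S / Q) with hsdef
    have hs : 0 < s := Real.sqrt_pos.mpr (by positivity)
    have hs2 : s ^ 2 = S / Q := Real.sq_sqrt (by positivity)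
    set c1 := s / u23 with hc1def
    set c2 := s / u31 with hc2def
    set c3 := s / u12 with hc3def
    have hc1 : 0 < c1 := by positivity
    have hc2 : 0 < c2 := by positivity
    have hc3 : 0 < c3 := by positivity
    have hSsum : m 0 * c1 ^ 2 + m 1 * c2 ^ 2 + m 2 * c3 ^ 2 = S := by
      have : m 0 * c1 ^ 2 + m 1 * c2 ^ 2 + m 2 * c3 ^ 2 = s ^ 2 * Q := by
        rw [hc1def, hc2def, hc3def, hQdef]
        field_simp
      rw [this, hs2, div_mul_cancel₀ _ (ne_of_gt hQ)]
    set ω := Real.sqrt (S * (u12 * u23 * u31) / s ^ 2) with hωdef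
    have hω2 : ω ^ 2 = S * (u12 * u23 * u31) / s ^ 2 :=
      Real.sq_sqrt (by positivity)
    have hw : ![Real.sqrt (m 0) * c1, Real.sqrt (m 1) * c2, Real.sqrt (m 2) * c3]
        = s • ![Real.sqrt (m 0) / u23, Real.sqrt (m 1) / u31, Real.sqrt (m 2) / u12] := by
      funext i
      fin_cases i <;>
        simp [hc1def, hc2def, hc3def, div_eq_mul_inv] <;> ring
    refine ⟨c1, c2, c3, ω, hc1, hc2, hc3, ?_, ?_, ?_, ?_⟩
    · rw [hw, Matrix.mulVec_smul, heig, smul_comm, hSsum]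
      have : M - S = lam := by rw [hSdef]; ring
      rw [this]
    · rw [hc1def, hc2def, hc3def]
      field_simp
    · rw [hc1def, hc2def, hc3def]
      field_simp
    · rw [hSsum, hω2, hc1def, hc3def]
      field_simp
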